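/- Let K^f, K^r, K^s ⊆ ℝ satisfy: K^r ⊆ K^s, K^{fr} := K^f ∩ K^r is nonempty, K^f is downward closed, and sup K^f = inf K^s. Then K^{fr} is a singleton {p*}, the value p* satisfies p* = max K^f = min K^r = min K^{fr} = min K^s, and in particular p* is finite. -/
import Mathlib


/-- Abstraction of Lemma 2.6: the set of fair replication costs is a singleton and its
unique element is the maximum fair price, the minimum replication cost and the
minimum superhedging cost. -/
theorem stmt_2 (Kf Kr Ks : Set ℝ) (v : ℝ)
    (hrs : Kr ⊆ Ks)
    (hne : (Kf ∩ Kr).Nonempty)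
    (hdc : ∀ p ∈ Kf, ∀ q : ℝ, q < p → q ∈ Kf)
    (hlub : IsLUB Kf v) (hglb : IsGLB Ks v) :
    Kf ∩ Kr = {v} ∧ IsGreatest Kf v ∧ IsLeast Kr v ∧
      IsLeast (Kf ∩ Kr) v ∧ IsLeast Ks v := by
  have key : ∀ p ∈ Kf ∩ Kr, p = v := by
    intro p hp
    exact le_antisymm (hlub.1 hp.1) (hglb.1 (hrs hp.2))
  obtain ⟨p, hp⟩ := hne
  have hpv : p = v := key p hp
  have hv : v ∈ Kf ∩ Kr := hpv ▸ hp
  refine ⟨?_, ⟨hv.1, hlub.1⟩, ⟨hv.2, fun q hq => hglb.1 (hrs hq)⟩,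
    ⟨hv, fun q hq => (key q hq).ge⟩, ⟨hrs hv.2, hglb.1⟩⟩
  ext x
  simp only [Set.mem_singleton_iff]
  exact ⟨fun h => key x h, fun h => h ▸ hv⟩
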